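/- Let f : ℝⁿ → ℝ be a C¹ function, c ∈ ℝ and u₀ ∈ S^{n-1} a unit vector. Let A be an n×n real diagonal matrix whose diagonal entries are positive and pairwise distinct, and assume that neither Au₀/‖Au₀‖ nor −Au₀/‖Au₀‖ belongs to V(u₀). Then there exist γ ∈ (0,1), R > 0, ε > 0 and η > 0 such that for every x ∈ ℝⁿ with ∇f(x) ≠ 0, ‖x‖ > R, |f(x) − c| < ε and ‖x/‖x‖ − u₀‖ < η, one has |⟨Ax/‖Ax‖, ∇f(x)/‖∇f(x)‖⟩| < γ. -/

import Mathlib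

open Filter Topology
open scoped RealInnerProductSpace

/-- The action of an `n × n` real matrix on Euclidean space `ℝⁿ`. -/
noncomputable def matApply {n : ℕ} (A : Matrix (Fin n) (Fin n) ℝ)
    (x : EuclideanSpace ℝ (Fin n)) : EuclideanSpace ℝ (Fin n) :=
  (EuclideanSpace.equiv (Fin n) ℝ).symm (A.mulVec (EuclideanSpace.equiv (Fin n) ℝ x))

/-- The set `V(u)`: unit vectors `ν` which are limits of normalised gradients
`∇f(x_k)/‖∇f(x_k)‖` along sequences with `‖x_k‖ → ∞`, `x_k/‖x_k‖ → u` and `f(x_k) → c`. -/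
def limGradDirs {n : ℕ} (f : EuclideanSpace ℝ (Fin n) → ℝ) (c : ℝ)
    (u : EuclideanSpace ℝ (Fin n)) : Set (EuclideanSpace ℝ (Fin n)) :=
  {ν | ‖ν‖ = 1 ∧ ∃ x : ℕ → EuclideanSpace ℝ (Fin n),
    (∀ k, gradient f (x k) ≠ 0) ∧
    Tendsto (fun k => ‖x k‖) atTop atTop ∧
    Tendsto (fun k => (‖x k‖)⁻¹ • x k) atTop (𝓝 u) ∧
    Tendsto (fun k => f (x k)) atTop (𝓝 c) ∧
    Tendsto (fun k => (‖gradient f (x k)‖)⁻¹ • gradient f (x k)) atTop (𝓝 ν)}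

/-- The matrix action as a continuous linear map. -/
noncomputable def matCLM {n : ℕ} (A : Matrix (Fin n) (Fin n) ℝ) :
    EuclideanSpace ℝ (Fin n) →L[ℝ] EuclideanSpace ℝ (Fin n) :=
  LinearMap.toContinuousLinearMap
    { toFun := matApply A
      map_add' := fun x y => by
        simp [matApply, Matrix.mulVec_add, map_add]
      map_smul' := fun t x => by
        simp [matApply, Matrix.mulVec_smul, map_smul] }

lemma matCLM_apply {n : ℕ} (A : Matrix (Fin n) (Fin n) ℝ) (x : EuclideanSpace ℝ (Fin n)) :
    matCLM A x = matApply A x := rfl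

lemma matApply_smul {n : ℕ} (A : Matrix (Fin n) (Fin n) ℝ) (t : ℝ)
    (x : EuclideanSpace ℝ (Fin n)) : matApply A (t • x) = t • matApply A x := by
  rw [← matCLM_apply, ← matCLM_apply, map_smul]

/-- Let `f : ℝⁿ → ℝ` be `C¹`, `c ∈ ℝ`, `u₀` a unit vector, and `A` a diagonal matrix with
positive, pairwise distinct diagonal entries such that neither `Au₀/‖Au₀‖` nor
`−Au₀/‖Au₀‖` belongs to `V(u₀)`.  Then there exist `γ ∈ (0,1)`, `R > 0`, `ε > 0`, `η > 0`
such that `|⟨Ax/‖Ax‖, ∇f(x)/‖∇f(x)‖⟩| < γ` whenever `∇f(x) ≠ 0`, `‖x‖ > R`,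
`|f(x) − c| < ε` and `‖x/‖x‖ − u₀‖ < η`. -/
theorem statement9 {n : ℕ} (f : EuclideanSpace ℝ (Fin n) → ℝ) (hf : ContDiff ℝ 1 f)
    (c : ℝ) (u₀ : EuclideanSpace ℝ (Fin n)) (hu₀ : ‖u₀‖ = 1)
    (dvec : Fin n → ℝ) (hpos : ∀ i, 0 < dvec i) (hinj : Function.Injective dvec)
    (hV : (‖matApply (Matrix.diagonal dvec) u₀‖)⁻¹ • matApply (Matrix.diagonal dvec) u₀
            ∉ limGradDirs f c u₀ ∧
          -((‖matApply (Matrix.diagonal dvec) u₀‖)⁻¹ • matApply (Matrix.diagonal dvec) u₀)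
            ∉ limGradDirs f c u₀) :
    ∃ γ ∈ Set.Ioo (0:ℝ) 1, ∃ R > (0:ℝ), ∃ ε > (0:ℝ), ∃ η > (0:ℝ),
      ∀ x : EuclideanSpace ℝ (Fin n), gradient f x ≠ 0 → R < ‖x‖ → |f x - c| < ε →
        ‖(‖x‖)⁻¹ • x - u₀‖ < η →
        |⟪(‖matApply (Matrix.diagonal dvec) x‖)⁻¹ • matApply (Matrix.diagonal dvec) x,
           (‖gradient f x‖)⁻¹ • gradient f x⟫| < γ := by
  classical
  set A := Matrix.diagonal dvec with hA
  -- `A u₀ ≠ 0`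
  have hAu₀ : matApply A u₀ ≠ 0 := by
    intro h0
    have h1 : ∀ i, dvec i * u₀ i = 0 := by
      intro i
      have := congrArg (fun v => EuclideanSpace.equiv (Fin n) ℝ v i) h0
      simpa [matApply, hA, Matrix.mulVec_diagonal] using this
    have hzero : u₀ = 0 := by
      ext i
      have := h1 i
      have hd := (hpos i).ne'
      simpa [mul_eq_zero, hd] using this
    rw [hzero] at hu₀
    simp at hu₀
  set w : EuclideanSpace ℝ (Fin n) := (‖matApply A u₀‖)⁻¹ • matApply A u₀ with hwdef
  have hwnorm : ‖w‖ = 1 := by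
    rw [hwdef]
    exact norm_smul_inv_norm hAu₀
  by_contra hcon
  push_neg at hcon
  have hx : ∀ k : ℕ, ∃ x : EuclideanSpace ℝ (Fin n), gradient f x ≠ 0 ∧
      ((k:ℝ) + 1) < ‖x‖ ∧ |f x - c| < 1/((k:ℝ)+1) ∧
      ‖(‖x‖)⁻¹ • x - u₀‖ < 1/((k:ℝ)+1) ∧
      1 - 1/((k:ℝ)+2) ≤ |⟪(‖matApply A x‖)⁻¹ • matApply A x,
        (‖gradient f x‖)⁻¹ • gradient f x⟫| := by
    intro k
    have hk2 : (0:ℝ) < (k:ℝ) + 2 := by positivity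
    have hγ : (1 - 1/((k:ℝ)+2)) ∈ Set.Ioo (0:ℝ) 1 := by
      constructor
      · have h1 : 1/((k:ℝ)+2) < 1 := by
          rw [div_lt_one hk2]
          have : (0:ℝ) ≤ (k:ℝ) := Nat.cast_nonneg k
          linarith
        linarith
      · have : 0 < 1/((k:ℝ)+2) := by positivity
        linarith
    obtain ⟨x, h⟩ := hcon _ hγ ((k:ℝ)+1) (by positivity) (1/((k:ℝ)+1)) (by positivity)
      (1/((k:ℝ)+1)) (by positivity)
    exact ⟨x, h.1, h.2.1, h.2.2.1, h.2.2.2.1, h.2.2.2.2⟩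
  choose x hg hR hfc hu hγ using hx
  have hxpos : ∀ k, (0:ℝ) < ‖x k‖ := fun k => by
    have := hR k
    have : (0:ℝ) ≤ (k:ℝ) := Nat.cast_nonneg k
    linarith [hR k]
  -- extract a convergent subsequence of the normalized gradients
  have hνs : ∀ k, (‖gradient f (x k)‖)⁻¹ • gradient f (x k) ∈
      Metric.sphere (0 : EuclideanSpace ℝ (Fin n)) 1 := by
    intro k
    rw [mem_sphere_zero_iff_norm]
    exact norm_smul_inv_norm (hg k)
  obtain ⟨ν, hνmem, φ, hφ, hνlim⟩ :=
    (isCompact_sphere (0 : EuclideanSpace ℝ (Fin n)) 1).tendsto_subseq hνs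
  have hν1 : ‖ν‖ = 1 := mem_sphere_zero_iff_norm.mp hνmem
  have hνlim' : Tendsto (fun k => (‖gradient f (x (φ k))‖)⁻¹ • gradient f (x (φ k)))
      atTop (𝓝 ν) := by
    exact hνlim
  have hφle : ∀ k : ℕ, (k:ℝ) ≤ (φ k : ℝ) := fun k => Nat.cast_le.mpr hφ.le_apply
  -- auxiliary limit: 1/(k+1) → 0
  have hone : Tendsto (fun k : ℕ => 1/((k:ℝ)+1)) atTop (𝓝 0) :=
    tendsto_one_div_add_atTop_nhds_zero_nat
  -- ‖x (φ k)‖ → ∞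
  have hnorm_top : Tendsto (fun k => ‖x (φ k)‖) atTop atTop := by
    apply tendsto_atTop_mono (f := fun k : ℕ => (k:ℝ))
    · intro k
      have h1 := hR (φ k)
      have h2 := hφle k
      linarith
    · exact tendsto_natCast_atTop_atTop
  -- x (φ k) / ‖x (φ k)‖ → u₀
  have hseq_u : Tendsto (fun k => (‖x (φ k)‖)⁻¹ • x (φ k)) atTop (𝓝 u₀) := by
    rw [tendsto_iff_norm_sub_tendsto_zero]
    apply squeeze_zero (fun k => norm_nonneg _) _ hone
    intro k
    have h1 := hu (φ k)
    have h2 : 1/((φ k : ℝ)+1) ≤ 1/((k:ℝ)+1) := by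
      apply one_div_le_one_div_of_le
      · positivity
      · linarith [hφle k]
    linarith
  -- f (x (φ k)) → c
  have hseq_f : Tendsto (fun k => f (x (φ k))) atTop (𝓝 c) := by
    rw [tendsto_iff_norm_sub_tendsto_zero]
    apply squeeze_zero (fun k => norm_nonneg _) _ hone
    intro k
    have h1 := hfc (φ k)
    have h2 : 1/((φ k : ℝ)+1) ≤ 1/((k:ℝ)+1) := by
      apply one_div_le_one_div_of_le
      · positivity
      · linarith [hφle k]
    rw [Real.norm_eq_abs]
    linarith
  -- ν belongs to limGradDirs
  have hmem : ν ∈ limGradDirs f c u₀ :=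
    ⟨hν1, fun k => x (φ k), fun k => hg (φ k), hnorm_top, hseq_u, hseq_f, hνlim'⟩
  -- normalized A x k equals normalized A (x k / ‖x k‖)
  have hw_eq : ∀ k, (‖matApply A (x k)‖)⁻¹ • matApply A (x k)
      = (‖matApply A ((‖x k‖)⁻¹ • x k)‖)⁻¹ • matApply A ((‖x k‖)⁻¹ • x k) := by
    intro k
    have ht : (0:ℝ) < ‖x k‖ := hxpos k
    rw [matApply_smul, norm_smul, smul_smul, Real.norm_eq_abs,
      abs_of_pos (inv_pos.mpr ht), mul_inv, inv_inv]
    congr 1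
    field_simp
  -- A x (φ k) / ‖A x (φ k)‖ → w
  have hwlim : Tendsto (fun k => (‖matApply A (x (φ k))‖)⁻¹ • matApply A (x (φ k)))
      atTop (𝓝 w) := by
    have hLc : Continuous fun v : EuclideanSpace ℝ (Fin n) => matApply A v := by
      have := (matCLM A).continuous
      exact this
    have hcont : ContinuousAt
        (fun v : EuclideanSpace ℝ (Fin n) => (‖matApply A v‖)⁻¹ • matApply A v) u₀ := by
      exact ((hLc.norm.continuousAt).inv₀
        (norm_ne_zero_iff.mpr hAu₀)).smul hLc.continuousAt
    have h5 : Tendsto (fun k => (‖matApply A ((‖x (φ k)‖)⁻¹ • x (φ k))‖)⁻¹ •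
        matApply A ((‖x (φ k)‖)⁻¹ • x (φ k))) atTop (𝓝 w) := hcont.tendsto.comp hseq_u
    simp only [hw_eq]
    exact h5
  -- pass to the limit in the inner product
  have hinner : Tendsto (fun k => ⟪(‖matApply A (x (φ k))‖)⁻¹ • matApply A (x (φ k)),
      (‖gradient f (x (φ k))‖)⁻¹ • gradient f (x (φ k))⟫) atTop (𝓝 ⟪w, ν⟫) :=
    hwlim.inner hνlim'
  have hbound : ∀ k : ℕ, 1 - 1/((k:ℝ)+2) ≤ |⟪(‖matApply A (x (φ k))‖)⁻¹ • matApply A (x (φ k)),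
      (‖gradient f (x (φ k))‖)⁻¹ • gradient f (x (φ k))⟫| := by
    intro k
    have h1 := hγ (φ k)
    have h2 : 1/((φ k : ℝ)+2) ≤ 1/((k:ℝ)+2) := by
      apply one_div_le_one_div_of_le
      · positivity
      · linarith [hφle k]
    linarith
  have hlim1 : Tendsto (fun k : ℕ => 1 - 1/((k:ℝ)+2)) atTop (𝓝 1) := by
    have h2 : Tendsto (fun k : ℕ => ((k:ℝ)+2)) atTop atTop :=
      tendsto_atTop_add_const_right _ 2 tendsto_natCast_atTop_atTop
    have h3 : Tendsto (fun k : ℕ => ((k:ℝ)+2)⁻¹) atTop (𝓝 0) := h2.inv_tendsto_atTop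
    have h4 : Tendsto (fun _ : ℕ => (1:ℝ)) atTop (𝓝 1) := tendsto_const_nhds
    have := h4.sub h3
    simpa [one_div] using this
  have habs : (1:ℝ) ≤ |⟪w, ν⟫| :=
    le_of_tendsto_of_tendsto' hlim1 hinner.abs hbound
  have habs' : |⟪w, ν⟫| ≤ 1 := by
    have := abs_real_inner_le_norm w ν
    rwa [hwnorm, hν1, one_mul] at this
  have heq : |⟪w, ν⟫| = 1 := le_antisymm habs' habs
  rcases abs_eq (by norm_num : (0:ℝ) ≤ 1) |>.mp heq with h1 | h1
  · have : w = ν := (inner_eq_one_iff_of_norm_eq_one hwnorm hν1).mp h1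
    exact hV.1 (this ▸ hmem)
  · have h2 : ⟪-w, ν⟫ = 1 := by rw [inner_neg_left, h1]; ring
    have hwn : ‖-w‖ = 1 := by rwa [norm_neg]
    have : -w = ν := (inner_eq_one_iff_of_norm_eq_one hwn hν1).mp h2
    exact hV.2 (this ▸ hmem)
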